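/- For all r > 0, ξ ∈ (0,1), and p ∈ (0,1): Σ_{n ≥ k} C(n,k)·p^k·(1-p)^{n-k}·C(n+r-1,n)·ξ^n·(1-ξ)^r = C(k+r-1,k)·ξ_p^k·(1-ξ_p)^r for every k ≥ 0, where ξ_p = pξ/(1-ξ(1-p)). -/

import Mathlib

open Real MeasureTheory Set Filter

/-- Generalized negative binomial coefficient C(n+r-1, n) = Γ(n+r)/(Γ(n+1)Γ(r)). -/
noncomputable def nbCoef (r : ℝ) (n : ℕ) : ℝ :=
  Real.Gamma (n + r) / (Real.Gamma (n + 1) * Real.Gamma r)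

lemma nbCoef_pos {r : ℝ} (hr : 0 < r) (n : ℕ) : 0 < nbCoef r n := by
  unfold nbCoef
  have h1 : (0:ℝ) < (n:ℝ) + r := by positivity
  have h2 : (0:ℝ) < (n:ℝ) + 1 := by positivity
  positivity

lemma nbCoef_succ {r : ℝ} (hr : 0 < r) (n : ℕ) :
    nbCoef r (n + 1) = nbCoef r n * (((n:ℝ) + r) / ((n:ℝ) + 1)) := by
  unfold nbCoef
  have h1 : ((n:ℝ) + r) ≠ 0 := by positivity
  have h2 : ((n:ℝ) + 1) ≠ 0 := by positivity
  push_cast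
  rw [show (n:ℝ) + 1 + r = ((n:ℝ) + r) + 1 by ring, Real.Gamma_add_one h1,
    show (n:ℝ) + 1 + 1 = ((n:ℝ) + 1) + 1 by ring, Real.Gamma_add_one h2]
  field_simp

lemma nb_summable {s x : ℝ} (hs : 0 < s) (hx0 : 0 ≤ x) (hx1 : x < 1) :
    Summable (fun m : ℕ => nbCoef s m * x ^ m) := by
  rcases eq_or_lt_of_le hx0 with h0 | h0
  · apply summable_of_ne_finset_zero (s := {0})
    intro m hm
    simp only [Finset.mem_singleton] at hm
    rw [← h0, zero_pow hm, mul_zero]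
  · have hne : ∀ m : ℕ, nbCoef s m * x ^ m ≠ 0 := fun m =>
      ne_of_gt (mul_pos (nbCoef_pos hs m) (pow_pos h0 m))
    apply summable_of_ratio_test_tendsto_lt_one hx1 (Eventually.of_forall hne)
    have key : ∀ m : ℕ, ‖nbCoef s (m + 1) * x ^ (m + 1)‖ / ‖nbCoef s m * x ^ m‖
        = (((m:ℝ) + s) / ((m:ℝ) + 1)) * x := by
      intro m
      rw [Real.norm_eq_abs, Real.norm_eq_abs,
        abs_of_pos (mul_pos (nbCoef_pos hs _) (pow_pos h0 _)),
        abs_of_pos (mul_pos (nbCoef_pos hs _) (pow_pos h0 _)),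
        nbCoef_succ hs m, pow_succ]
      have h1 : nbCoef s m ≠ 0 := ne_of_gt (nbCoef_pos hs m)
      have h2 : x ^ m ≠ 0 := ne_of_gt (pow_pos h0 m)
      have h3 : ((m:ℝ) + 1) ≠ 0 := by positivity
      field_simp
    simp_rw [key]
    have hden : Tendsto (fun m : ℕ => (m:ℝ) + 1) atTop atTop :=
      tendsto_atTop_add_const_right atTop 1 tendsto_natCast_atTop_atTop
    have h1 : Tendsto (fun m : ℕ => (s - 1) / ((m:ℝ) + 1)) atTop (nhds 0) :=
      Tendsto.div_atTop tendsto_const_nhds hden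
    have h2 : Tendsto (fun m : ℕ => ((m:ℝ) + s) / ((m:ℝ) + 1)) atTop (nhds 1) := by
      have : ∀ m : ℕ, ((m:ℝ) + s) / ((m:ℝ) + 1) = 1 + (s - 1) / ((m:ℝ) + 1) := by
        intro m
        have h3 : ((m:ℝ) + 1) ≠ 0 := by positivity
        field_simp
        ring
      simp_rw [this]
      simpa using h1.const_add 1
    simpa using h2.mul_const x

lemma nb_tsum {s x : ℝ} (hs : 0 < s) (hx0 : 0 ≤ x) (hx1 : x < 1) :
    ∑' m : ℕ, nbCoef s m * x ^ m = (1 - x) ^ (-s) := by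
  have hΓ : Real.Gamma s ≠ 0 := ne_of_gt (Real.Gamma_pos_of_pos hs)
  rcases eq_or_lt_of_le hx0 with h0 | h0
  · rw [tsum_eq_single 0 (fun m hm => by rw [← h0, zero_pow hm, mul_zero])]
    simp [nbCoef, Real.Gamma_one, div_self hΓ, ← h0]
  · -- integral representation
    set f : ℕ → ℝ → ℝ := fun m t =>
      Real.exp (-t) * t ^ ((m:ℝ) + s - 1) * (x ^ m / (m.factorial * Real.Gamma s)) with hf
    have hms : ∀ m : ℕ, (0:ℝ) < (m:ℝ) + s := fun m => by positivity
    have hint : ∀ m : ℕ, IntegrableOn (f m) (Ioi 0) := by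
      intro m
      exact (Real.GammaIntegral_convergent (hms m)).mul_const _
    have hval : ∀ m : ℕ, ∫ t in Ioi 0, f m t = nbCoef s m * x ^ m := by
      intro m
      rw [hf]
      simp only
      rw [MeasureTheory.integral_mul_const, ← Real.Gamma_eq_integral (hms m)]
      unfold nbCoef
      rw [Real.Gamma_nat_eq_factorial]
      field_simp
    have hnonneg : ∀ m : ℕ, ∀ t ∈ Ioi (0:ℝ), 0 ≤ f m t := by
      intro m t ht
      have ht' : (0:ℝ) < t := ht
      have := Real.rpow_pos_of_pos ht' ((m:ℝ) + s - 1)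
      positivity
    have hmeas : ∀ m : ℕ, AEStronglyMeasurable (f m)
        (volume.restrict (Ioi (0:ℝ))) := fun m => (hint m).aestronglyMeasurable
    -- swap sum and integral
    have hsum := nb_summable hs hx0 hx1
    have hswap : ∫ t in Ioi 0, (∑' m : ℕ, f m t) = ∑' m : ℕ, ∫ t in Ioi 0, f m t := by
      apply MeasureTheory.integral_tsum hmeas
      have : ∀ m : ℕ, ∫⁻ t in Ioi 0, ‖f m t‖ₑ ∂volume
          = ENNReal.ofReal (nbCoef s m * x ^ m) := by
        intro m
        rw [← hval m, MeasureTheory.ofReal_integral_eq_lintegral_ofReal (hint m)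
          ((ae_restrict_iff' measurableSet_Ioi).2 (Eventually.of_forall (hnonneg m)))]
        apply lintegral_congr_ae
        filter_upwards [ae_restrict_mem measurableSet_Ioi] with t ht
        rw [← ofReal_norm_eq_enorm, Real.norm_of_nonneg (hnonneg m t ht)]
      rw [funext this, ← ENNReal.ofReal_tsum_of_nonneg
        (fun m => le_of_lt (mul_pos (nbCoef_pos hs m) (pow_pos h0 m))) hsum]
      exact ENNReal.ofReal_ne_top
    rw [← funext hval, ← hswap]
    -- compute the inner sum pointwise
    have hpt : ∀ t ∈ Ioi (0:ℝ), (∑' m : ℕ, f m t)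
        = t ^ (s - 1) * Real.exp (-((1 - x) * t)) * (1 / Real.Gamma s) := by
      intro t ht
      have ht' : (0:ℝ) < t := ht
      have hterm : ∀ m : ℕ, f m t
          = (Real.exp (-t) * t ^ (s - 1) / Real.Gamma s) * ((x * t) ^ m / m.factorial) := by
        intro m
        rw [hf]
        simp only
        rw [show (m:ℝ) + s - 1 = (m:ℝ) + (s - 1) by ring,
          Real.rpow_add ht', Real.rpow_natCast, mul_pow]
        field_simp
      rw [funext hterm, tsum_mul_left]
      have hexp : (∑' m : ℕ, (x * t) ^ m / (m.factorial : ℝ)) = Real.exp (x * t) := by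
        rw [Real.exp_eq_exp_ℝ, NormedSpace.exp_eq_tsum_div]
      rw [hexp, show -((1 - x) * t) = -t + (x * t) by ring, Real.exp_add]
      ring
    rw [MeasureTheory.setIntegral_congr_fun measurableSet_Ioi hpt,
      MeasureTheory.integral_mul_const,
      Real.integral_rpow_mul_exp_neg_mul_Ioi hs (by linarith : (0:ℝ) < 1 - x)]
    rw [one_div, Real.inv_rpow (by linarith : (0:ℝ) ≤ 1 - x), ← Real.rpow_neg (by linarith)]
    field_simp

lemma nbCoef_mul {r : ℝ} (hr : 0 < r) (k m : ℕ) :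
    ((k + m).choose k : ℝ) * nbCoef r (k + m) = nbCoef r k * nbCoef (r + k) m := by
  unfold nbCoef
  rw [Nat.cast_choose ℝ (Nat.le_add_right k m), Nat.add_sub_cancel_left]
  rw [Real.Gamma_nat_eq_factorial, Real.Gamma_nat_eq_factorial,
    Real.Gamma_nat_eq_factorial]
  have h1 : Real.Gamma (((k + m : ℕ)):ℝ) + r > 0 := by positivity
  have hΓr : Real.Gamma r ≠ 0 := ne_of_gt (Real.Gamma_pos_of_pos hr)
  have hΓrk : Real.Gamma (r + k) ≠ 0 :=
    ne_of_gt (Real.Gamma_pos_of_pos (by positivity))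
  have hk : ((k.factorial : ℝ)) ≠ 0 := Nat.cast_ne_zero.2 k.factorial_ne_zero
  have hm : ((m.factorial : ℝ)) ≠ 0 := Nat.cast_ne_zero.2 m.factorial_ne_zero
  have hkm : (((k + m).factorial : ℝ)) ≠ 0 := Nat.cast_ne_zero.2 (k + m).factorial_ne_zero
  have heq1 : (((k + m : ℕ)):ℝ) + r = (m:ℝ) + (r + k) := by push_cast; ring
  rw [heq1]
  field_simp
  ring

/-- Binomial thinning identity for the (untruncated) negative binomial:
Σ_{n ≥ k} C(n,k) p^k (1-p)^{n-k} C(n+r-1,n) ξ^n (1-ξ)^r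
  = C(k+r-1,k) ξ_p^k (1-ξ_p)^r, where ξ_p = pξ/(1-ξ(1-p)). -/
theorem stmt1 (r ξ p : ℝ) (hr : 0 < r) (hξ : ξ ∈ Set.Ioo (0:ℝ) 1)
    (hp : p ∈ Set.Ioo (0:ℝ) 1) (k : ℕ) :
    ∑' m : ℕ, ((k + m).choose k : ℝ) * p ^ k * (1 - p) ^ m *
        (nbCoef r (k + m) * ξ ^ (k + m) * (1 - ξ) ^ r)
      = nbCoef r k * (p * ξ / (1 - ξ * (1 - p))) ^ k *
        (1 - p * ξ / (1 - ξ * (1 - p))) ^ r := by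
  obtain ⟨hξ0, hξ1⟩ := hξ
  obtain ⟨hp0, hp1⟩ := hp
  set y : ℝ := (1 - p) * ξ with hy
  have hy0 : 0 ≤ y := by
    apply mul_nonneg <;> nlinarith
  have hy1 : y < 1 := by nlinarith
  have hD : (0:ℝ) < 1 - y := by linarith
  set C : ℝ := nbCoef r k * p ^ k * ξ ^ k * (1 - ξ) ^ r with hC
  have hterm : ∀ m : ℕ, (((k + m).choose k : ℝ) * p ^ k * (1 - p) ^ m *
      (nbCoef r (k + m) * ξ ^ (k + m) * (1 - ξ) ^ r))
      = C * (nbCoef (r + k) m * y ^ m) := by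
    intro m
    have h := nbCoef_mul hr k m
    calc ((k + m).choose k : ℝ) * p ^ k * (1 - p) ^ m *
        (nbCoef r (k + m) * ξ ^ (k + m) * (1 - ξ) ^ r)
        = (((k + m).choose k : ℝ) * nbCoef r (k + m)) *
          (p ^ k * (1 - p) ^ m * ξ ^ (k + m) * (1 - ξ) ^ r) := by ring
      _ = (nbCoef r k * nbCoef (r + k) m) *
          (p ^ k * (1 - p) ^ m * ξ ^ (k + m) * (1 - ξ) ^ r) := by rw [h]
      _ = C * (nbCoef (r + k) m * y ^ m) := by
          rw [hC, hy, pow_add, mul_pow]; ring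
  rw [tsum_congr hterm, tsum_mul_left,
    nb_tsum (by positivity : (0:ℝ) < r + k) hy0 hy1]
  -- algebra
  have hDy : 1 - ξ * (1 - p) = 1 - y := by rw [hy]; ring
  rw [hDy]
  have h1 : 1 - p * ξ / (1 - y) = (1 - ξ) / (1 - y) := by
    field_simp
    rw [hy]; ring
  rw [h1, div_pow, Real.div_rpow (by linarith) hD.le,
    show -(r + (k:ℝ)) = (-r) + (-(k:ℝ)) by ring, Real.rpow_add hD,
    Real.rpow_neg hD.le r, Real.rpow_neg hD.le (k:ℝ), Real.rpow_natCast, hC]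
  have hk1 : (1 - y) ^ k ≠ 0 := by positivity
  have hr1 : ((1 - y) ^ (r:ℝ)) ≠ 0 := ne_of_gt (Real.rpow_pos_of_pos hD r)
  field_simp
  ring
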